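/- Let m ≥ 7 be odd. For every nonzero α in the algebraic closure of F_2, the polynomial L_α(x^m) has distinct critical values if and only if: for all ζ₁, ζ₂ ≠ 1 in the algebraic closure of F_2 with ζ₁^{m-1} = ζ₂^{m-1} = ((1+ζ₁)/(1+ζ₂))^{m-1} = 1, one has ζ₁ = ζ₂ or ζ₁ = ζ₂⁻¹. -/

import Mathlib

open Polynomial

variable {K : Type*} [Field K] [CharP K 2]

noncomputable def dick (α : K) : ℕ → Polynomial K
  | 0 => 0
  | 1 => C α
  | (k+2) => C α * dick α (k+1) + X * dick α k

lemma dick_comp (α : K) : ∀ k : ℕ, (dick α k).comp (X * (X + C α)) = X ^ k + (X + C α) ^ k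
  | 0 => by
      have h2 : (2 : Polynomial K) = 0 := CharTwo.two_eq_zero
      simp only [dick, zero_comp, pow_zero]
      linear_combination -h2
  | 1 => by
      have h2 : (2 : Polynomial K) = 0 := CharTwo.two_eq_zero
      simp only [dick, C_comp, pow_one]
      linear_combination -X * h2
  | (k+2) => by
      have h2 : (2 : Polynomial K) = 0 := CharTwo.two_eq_zero
      have h1 := dick_comp α (k+1)
      have h0 := dick_comp α k
      simp only [dick, add_comp, mul_comp, C_comp, X_comp, h1, h0]
      linear_combination (X^(k+1)*(X + C α) - X^(k+2)) * h2

lemma exists_param [IsAlgClosed K] (α τ : K) : ∃ x : K, x * (x + α) = τ := by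
  have h2 : (2 : K) = 0 := CharTwo.two_eq_zero
  obtain ⟨x, hx⟩ := IsAlgClosed.exists_root (X ^ 2 + C α * X + C τ) (by
    have : (X ^ 2 + C α * X + C τ : K[X]).degree = 2 := by compute_degree!
    simp [this])
  refine ⟨x, ?_⟩
  simp only [IsRoot, eval_add, eval_pow, eval_mul, eval_C, eval_X] at hx
  linear_combination hx - τ * h2

omit [CharP K 2] in
lemma key_eval {m : ℕ} (α : K) (g : K[X])
    (hg : g.comp (X * (X + C α)) = X ^ m + (X + C α) ^ m) (x : K) :
    g.eval (x * (x + α)) = x ^ m + (x + α) ^ m := by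
  have := congrArg (eval x) hg
  simpa [eval_comp] using this

lemma key_deriv {m : ℕ} (hodd : Odd m) (α : K) (g : K[X])
    (hg : g.comp (X * (X + C α)) = X ^ m + (X + C α) ^ m) (x : K) :
    (derivative g).eval (x * (x + α)) * α = x ^ (m-1) + (x + α) ^ (m-1) := by
  have h2 : (2 : K) = 0 := CharTwo.two_eq_zero
  have h2p : (2 : Polynomial K) = 0 := CharTwo.two_eq_zero
  have hmK : ((m : K)) = 1 := by
    obtain ⟨j, hj⟩ := hodd; subst hj; push_cast; linear_combination (j : K) * h2
  have hu : derivative (X * (X + C α) : K[X]) = C α := by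
    simp only [derivative_mul, derivative_X, derivative_add, derivative_C, one_mul, mul_one,
      add_zero]
    linear_combination X * h2p
  have hd := congrArg derivative hg
  rw [derivative_comp, hu, derivative_add, derivative_pow, derivative_pow] at hd
  simp only [derivative_X, derivative_add, derivative_C, add_zero, mul_one] at hd
  have := congrArg (eval x) hd
  simp only [eval_mul, eval_comp, eval_C, eval_add, eval_X, eval_pow, hmK, one_mul] at this
  linear_combination this

/-- `L_α(x^m)` has distinct critical values for all nonzero `α` iff the root-of-unity
condition defining the set `M` holds. -/
theorem stmt11 (m : ℕ) (hm : 7 ≤ m) (hodd : Odd m) :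
    (∀ α : AlgebraicClosure (ZMod 2), α ≠ 0 →
      ∀ g : Polynomial (AlgebraicClosure (ZMod 2)),
        g.comp (X * (X + C α)) = X ^ m + (X + C α) ^ m →
        ∀ τ η, (derivative g).eval τ = 0 → (derivative g).eval η = 0 →
          g.eval τ = g.eval η → τ = η) ↔
    (∀ ζ₁ ζ₂ : AlgebraicClosure (ZMod 2), ζ₁ ≠ 1 → ζ₂ ≠ 1 →
      ζ₁ ^ (m - 1) = 1 → ζ₂ ^ (m - 1) = 1 → ((1 + ζ₁) / (1 + ζ₂)) ^ (m - 1) = 1 →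
      ζ₁ = ζ₂ ∨ ζ₁ = ζ₂⁻¹) := by
  have h2 : (2 : AlgebraicClosure (ZMod 2)) = 0 := CharTwo.two_eq_zero
  have hm1 : m - 1 + 1 = m := Nat.sub_add_cancel (by omega)
  have hm1pos : m - 1 ≠ 0 := by omega
  constructor
  · -- forward direction
    intro h ζ₁ ζ₂ hζ1 hζ2 hz1 hz2 hz12
    have hne1 : (1 : AlgebraicClosure (ZMod 2)) + ζ₁ ≠ 0 := by
      intro hc; exact hζ1 (by linear_combination hc - h2)
    have hne2 : (1 : AlgebraicClosure (ZMod 2)) + ζ₂ ≠ 0 := by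
      intro hc; exact hζ2 (by linear_combination hc - h2)
    set x₁ := (1 + ζ₁)⁻¹ with hx₁def
    set x₂ := (1 + ζ₂)⁻¹ with hx₂def
    have hx1ne : x₁ ≠ 0 := inv_ne_zero hne1
    have hx2ne : x₂ ≠ 0 := inv_ne_zero hne2
    have e1 : (1 + ζ₁) * x₁ = 1 := mul_inv_cancel₀ hne1
    have e2 : (1 + ζ₂) * x₂ = 1 := mul_inv_cancel₀ hne2
    have hq1 : x₁ + 1 = ζ₁ * x₁ := by
      field_simp [hx₁def]
      linear_combination -(mul_inv_cancel₀ hne1) + (1 + ζ₁)⁻¹ * h2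
    have hq2 : x₂ + 1 = ζ₂ * x₂ := by
      field_simp [hx₂def]
      linear_combination -(mul_inv_cancel₀ hne2) + (1 + ζ₂)⁻¹ * h2
    have hkd1 := key_deriv hodd 1 (dick 1 m) (dick_comp 1 m) x₁
    have hkd2 := key_deriv hodd 1 (dick 1 m) (dick_comp 1 m) x₂
    rw [mul_one] at hkd1 hkd2
    have hke1 := key_eval 1 (dick 1 m) (dick_comp 1 m) x₁
    have hke2 := key_eval 1 (dick 1 m) (dick_comp 1 m) x₂
    have hd1 : (derivative (dick 1 m)).eval (x₁ * (x₁ + 1)) = 0 := by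
      rw [hkd1, hq1, mul_pow, hz1, one_mul]
      linear_combination x₁ ^ (m-1) * h2
    have hd2 : (derivative (dick 1 m)).eval (x₂ * (x₂ + 1)) = 0 := by
      rw [hkd2, hq2, mul_pow, hz2, one_mul]
      linear_combination x₂ ^ (m-1) * h2
    have hzm1 : ζ₁ ^ m = ζ₁ := by rw [← hm1, pow_succ, hz1, one_mul]
    have hzm2 : ζ₂ ^ m = ζ₂ := by rw [← hm1, pow_succ, hz2, one_mul]
    have hv1 : (dick 1 m).eval (x₁ * (x₁ + 1)) = x₁ ^ (m-1) := by
      rw [hke1, hq1, mul_pow, hzm1]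
      conv_lhs => rw [← hm1, pow_succ]
      linear_combination x₁ ^ (m-1) * e1
    have hv2 : (dick 1 m).eval (x₂ * (x₂ + 1)) = x₂ ^ (m-1) := by
      rw [hke2, hq2, mul_pow, hzm2]
      conv_lhs => rw [← hm1, pow_succ]
      linear_combination x₂ ^ (m-1) * e2
    have hpow : (1 + ζ₁) ^ (m-1) = (1 + ζ₂) ^ (m-1) := by
      rw [div_pow, div_eq_one_iff_eq (pow_ne_zero _ hne2)] at hz12
      exact hz12
    have hveq : (dick 1 m).eval (x₁ * (x₁ + 1)) = (dick 1 m).eval (x₂ * (x₂ + 1)) := by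
      rw [hv1, hv2, hx₁def, hx₂def, inv_pow, inv_pow, hpow]
    have hte := h 1 one_ne_zero (dick 1 m) (dick_comp 1 m) _ _ hd1 hd2 hveq
    have hfac : (x₁ + x₂) * (x₁ + x₂ + 1) = 0 := by
      linear_combination hte + (x₁ * x₂ + x₂ ^ 2 + x₂) * h2
    rcases mul_eq_zero.mp hfac with hc | hc
    · left
      have hx12 : x₁ = x₂ := by linear_combination hc - x₂ * h2
      have := inv_inj.mp (hx₁def ▸ hx₂def ▸ hx12)
      linear_combination this
    · right
      have hζ2ne0 : ζ₂ ≠ 0 := by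
        intro hz; rw [hz, zero_pow hm1pos] at hz2; exact zero_ne_one hz2
      have key : ζ₁ * ζ₂ = 1 := by
        linear_combination (1 + ζ₁) * (1 + ζ₂) * hc - (1 + ζ₂) * e1 - (1 + ζ₁) * e2
          - (2 + ζ₁ + ζ₂) * h2
      exact eq_inv_of_mul_eq_one_left (by linear_combination key)
  · -- reverse direction
    intro h α hα g hg τ η hdτ hdη hgeq
    obtain ⟨x, hx⟩ := exists_param α τ
    obtain ⟨y, hy⟩ := exists_param α η
    have hdx := key_deriv hodd α g hg x
    have hdy := key_deriv hodd α g hg y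
    rw [hx, hdτ, zero_mul] at hdx
    rw [hy, hdη, zero_mul] at hdy
    have hxa : (x + α) ^ (m-1) = x ^ (m-1) := by linear_combination -hdx - x ^ (m-1) * h2
    have hya : (y + α) ^ (m-1) = y ^ (m-1) := by linear_combination -hdy - y ^ (m-1) * h2
    have hx0 : x ≠ 0 := by
      intro hc
      rw [hc, zero_add, zero_pow hm1pos] at hxa
      exact hα (pow_eq_zero_iff hm1pos |>.mp hxa)
    have hxα0 : x + α ≠ 0 := by
      intro hc
      rw [hc, zero_pow hm1pos] at hxa
      exact hx0 (pow_eq_zero_iff hm1pos |>.mp hxa.symm)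
    have hy0 : y ≠ 0 := by
      intro hc
      rw [hc, zero_add, zero_pow hm1pos] at hya
      exact hα (pow_eq_zero_iff hm1pos |>.mp hya)
    have hyα0 : y + α ≠ 0 := by
      intro hc
      rw [hc, zero_pow hm1pos] at hya
      exact hy0 (pow_eq_zero_iff hm1pos |>.mp hya.symm)
    have hgx := key_eval α g hg x
    have hgy := key_eval α g hg y
    rw [hx] at hgx; rw [hy] at hgy
    have hvx : g.eval τ = α * x ^ (m-1) := by
      rw [hgx]
      conv_lhs => rw [← hm1, pow_succ, pow_succ]
      linear_combination (x + α) * hxa + x ^ (m-1) * x * h2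
    have hvy : g.eval η = α * y ^ (m-1) := by
      rw [hgy]
      conv_lhs => rw [← hm1, pow_succ, pow_succ]
      linear_combination (y + α) * hya + y ^ (m-1) * y * h2
    have hxy : x ^ (m-1) = y ^ (m-1) := by
      have := hgeq
      rw [hvx, hvy] at this
      exact mul_left_cancel₀ hα this
    have hζ1 : ((x + α) / x) ≠ 1 := by
      intro hc; rw [div_eq_one_iff_eq hx0] at hc
      exact hα (by linear_combination hc)
    have hζ2 : ((y + α) / y) ≠ 1 := by
      intro hc; rw [div_eq_one_iff_eq hy0] at hc
      exact hα (by linear_combination hc)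
    have hp1 : ((x + α) / x) ^ (m-1) = 1 := by
      rw [div_pow, hxa, div_self (pow_ne_zero _ hx0)]
    have hp2 : ((y + α) / y) ^ (m-1) = 1 := by
      rw [div_pow, hya, div_self (pow_ne_zero _ hy0)]
    have hr1 : 1 + (x + α) / x = α / x := by
      field_simp
      linear_combination x * h2
    have hr2 : 1 + (y + α) / y = α / y := by
      field_simp
      linear_combination y * h2
    have hp12 : ((1 + (x + α) / x) / (1 + (y + α) / y)) ^ (m-1) = 1 := by
      have hq : α / x / (α / y) = y / x := by
        field_simp
      rw [hr1, hr2, hq, div_pow, ← hxy, div_self (pow_ne_zero _ hx0)]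
    rcases h _ _ hζ1 hζ2 hp1 hp2 hp12 with hc | hc
    · rw [div_eq_div_iff hx0 hy0] at hc
      have hxyeq : x = y := by
        have : α * (x + y) = 0 := by linear_combination hc + α * x * h2
        rcases mul_eq_zero.mp this with h' | h'
        · exact absurd h' hα
        · linear_combination h' - y * h2
      rw [← hx, ← hy, hxyeq]
    · rw [inv_div, div_eq_div_iff hx0 hyα0] at hc
      have hyxa : y = x + α := by
        have : α * (x + y + α) = 0 := by linear_combination hc
        rcases mul_eq_zero.mp this with h' | h'
        · exact absurd h' hα
        · linear_combination h' - (x + α) * h2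
      rw [← hx, ← hy, hyxa]
      linear_combination -(α * x + α ^ 2) * h2
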